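/- For every graph G, the open packing number of the subdivision graph S(G) equals α(G) + α'(G), where α(G) is the independence number of G and α'(G) is the matching number of G. -/

import Mathlib

variable {V : Type*}

/-- A set of vertices is an open packing if the open neighborhoods of distinct
vertices in it are pairwise disjoint. -/
def IsOpenPacking (G : SimpleGraph V) (S : Set V) : Prop :=
  S.Pairwise fun u v => Disjoint (G.neighborSet u) (G.neighborSet v)

/-- The open packing number: the maximum cardinality of an open packing. -/
noncomputable def openPackingNumber (G : SimpleGraph V) : ℕ :=
  sSup {n | ∃ S : Finset V, IsOpenPacking G ↑S ∧ S.card = n}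

/-- `U` is the unique maximum open packing of `G`. -/
def HasUniqueMaxOpenPacking (G : SimpleGraph V) (U : Finset V) : Prop :=
  IsOpenPacking G ↑U ∧ U.card = openPackingNumber G ∧
    ∀ S : Finset V, IsOpenPacking G ↑S → S.card = openPackingNumber G → S = U

/-- A set of vertices is independent if no two of its vertices are adjacent. -/
def IsIndepVSet (G : SimpleGraph V) (S : Set V) : Prop :=
  S.Pairwise fun u v => ¬ G.Adj u v

/-- The independence number of a graph. -/
noncomputable def indepNumber (G : SimpleGraph V) : ℕ :=
  sSup {n | ∃ S : Finset V, IsIndepVSet G ↑S ∧ S.card = n}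

/-- A set of edges is a matching if the edges are pairwise disjoint. -/
def IsMatchingSet (G : SimpleGraph V) (M : Set (Sym2 V)) : Prop :=
  M ⊆ G.edgeSet ∧ M.Pairwise fun e f => ∀ v : V, v ∈ e → v ∉ f

/-- The matching number of a graph. -/
noncomputable def matchingNumber (G : SimpleGraph V) : ℕ :=
  sSup {n | ∃ M : Finset (Sym2 V), IsMatchingSet G ↑M ∧ M.card = n}

/-- The subdivision of `G`: each edge `e = uv` is replaced by a new vertex
`Sum.inr e` adjacent exactly to `u` and `v`. -/
def subdivisionGraph (G : SimpleGraph V) : SimpleGraph (V ⊕ G.edgeSet) :=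
  SimpleGraph.fromRel fun a b => match a, b with
    | Sum.inl u, Sum.inr e => u ∈ (e : Sym2 V)
    | _, _ => False


section Aux

lemma bddAbove_cards {α : Type*} [Fintype α] (P : Finset α → Prop) :
    BddAbove {n | ∃ S : Finset α, P S ∧ S.card = n} := by
  refine ⟨Fintype.card α, ?_⟩
  rintro n ⟨S, -, rfl⟩
  exact S.card_le_univ

lemma le_card_sSup {α : Type*} [Fintype α] (P : Finset α → Prop) (S : Finset α) (hS : P S) :
    S.card ≤ sSup {n | ∃ S : Finset α, P S ∧ S.card = n} :=
  le_csSup (bddAbove_cards P) ⟨S, hS, rfl⟩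

lemma exists_card_eq_sSup {α : Type*} [Fintype α] (P : Finset α → Prop) (h0 : P ∅) :
    ∃ S : Finset α, P S ∧ S.card = sSup {n | ∃ S : Finset α, P S ∧ S.card = n} := by
  have h := Nat.sSup_mem (s := {n | ∃ S : Finset α, P S ∧ S.card = n})
      ⟨0, ∅, h0, Finset.card_empty⟩ (bddAbove_cards P)
  obtain ⟨S, hS, hc⟩ := h
  exact ⟨S, hS, hc⟩

variable {G : SimpleGraph V}

lemma subdiv_adj_inl_inr (u : V) (e : G.edgeSet) :
    (subdivisionGraph G).Adj (Sum.inl u) (Sum.inr e) ↔ u ∈ (e : Sym2 V) := by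
  simp [subdivisionGraph, SimpleGraph.fromRel_adj]

lemma subdiv_not_adj_inl_inl (u v : V) :
    ¬ (subdivisionGraph G).Adj (Sum.inl u) (Sum.inl v) := by
  simp [subdivisionGraph, SimpleGraph.fromRel_adj]

lemma subdiv_not_adj_inr_inr (e f : G.edgeSet) :
    ¬ (subdivisionGraph G).Adj (Sum.inr e) (Sum.inr f) := by
  simp [subdivisionGraph, SimpleGraph.fromRel_adj]

lemma subdiv_adj_inr_inl (e : G.edgeSet) (u : V) :
    (subdivisionGraph G).Adj (Sum.inr e) (Sum.inl u) ↔ u ∈ (e : Sym2 V) := by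
  rw [SimpleGraph.adj_comm]; exact subdiv_adj_inl_inr u e

end Aux

theorem stmt_10 [Fintype V] [DecidableEq V] (G : SimpleGraph V) [DecidableRel G.Adj] :
    openPackingNumber (subdivisionGraph G) = indepNumber G + matchingNumber G := by
  classical
  apply le_antisymm
  · -- upper bound
    obtain ⟨S, hS, hcard⟩ := exists_card_eq_sSup
      (fun S : Finset (V ⊕ G.edgeSet) => IsOpenPacking (subdivisionGraph G) ↑S)
      (by simp [IsOpenPacking])
    rw [openPackingNumber, ← hcard]
    set A : Finset V := Finset.univ.filter (fun v => Sum.inl v ∈ S) with hA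
    set B : Finset G.edgeSet := Finset.univ.filter (fun e => Sum.inr e ∈ S) with hB
    have hSeq : S = A.image Sum.inl ∪ B.image Sum.inr := by
      ext x
      cases x with
      | inl u => simp [hA, hB]
      | inr e => simp [hA, hB]
    have hdisj : Disjoint (A.image Sum.inl) (B.image Sum.inr) := by
      rw [Finset.disjoint_left]
      intro x hx hx'
      simp only [Finset.mem_image] at hx hx'
      obtain ⟨u, -, rfl⟩ := hx
      obtain ⟨e, -, h⟩ := hx'
      cases h
    have hScard : S.card = A.card + B.card := by
      rw [hSeq, Finset.card_union_of_disjoint hdisj,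
        Finset.card_image_of_injective _ Sum.inl_injective,
        Finset.card_image_of_injective _ Sum.inr_injective]
    have hAmem : ∀ u ∈ A, Sum.inl u ∈ S := by intro u hu; simpa [hA] using hu
    have hBmem : ∀ e ∈ B, Sum.inr e ∈ S := by intro e he; simpa [hB] using he
    have hAindep : IsIndepVSet G ↑A := by
      intro u hu v hv huv hadj
      have hd := hS (hAmem u hu) (hAmem v hv) (by simp [huv])
      have h1 : (Sum.inr (⟨s(u, v), hadj⟩ : G.edgeSet) : V ⊕ G.edgeSet)
          ∈ (subdivisionGraph G).neighborSet (Sum.inl u) := by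
        simp [SimpleGraph.mem_neighborSet, subdiv_adj_inl_inr]
      have h2 : (Sum.inr (⟨s(u, v), hadj⟩ : G.edgeSet) : V ⊕ G.edgeSet)
          ∈ (subdivisionGraph G).neighborSet (Sum.inl v) := by
        simp [SimpleGraph.mem_neighborSet, subdiv_adj_inl_inr]
      exact Set.disjoint_left.mp hd h1 h2
    set M : Finset (Sym2 V) := B.image Subtype.val with hM
    have hMcard : M.card = B.card := Finset.card_image_of_injective _ Subtype.val_injective
    have hMmatch : IsMatchingSet G ↑M := by
      constructor
      · intro e he
        simp only [hM, Finset.coe_image, Set.mem_image, Finset.mem_coe] at he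
        obtain ⟨e', -, rfl⟩ := he
        exact e'.2
      · intro e he f hf hef v hve hvf
        simp only [hM, Finset.coe_image, Set.mem_image, Finset.mem_coe] at he hf
        obtain ⟨e', he', rfl⟩ := he
        obtain ⟨f', hf', rfl⟩ := hf
        have hne : e' ≠ f' := fun h => hef (by rw [h])
        have hd := hS (hBmem e' he') (hBmem f' hf') (by simp [hne])
        have h1 : (Sum.inl v : V ⊕ G.edgeSet)
            ∈ (subdivisionGraph G).neighborSet (Sum.inr e') := by
          simp [SimpleGraph.mem_neighborSet, subdiv_adj_inr_inl, hve]
        have h2 : (Sum.inl v : V ⊕ G.edgeSet)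
            ∈ (subdivisionGraph G).neighborSet (Sum.inr f') := by
          simp [SimpleGraph.mem_neighborSet, subdiv_adj_inr_inl, hvf]
        exact Set.disjoint_left.mp hd h1 h2
    calc S.card = A.card + M.card := by rw [hScard, hMcard]
      _ ≤ indepNumber G + matchingNumber G := by
          exact Nat.add_le_add
            (le_card_sSup (fun S : Finset V => IsIndepVSet G ↑S) A hAindep)
            (le_card_sSup (fun M : Finset (Sym2 V) => IsMatchingSet G ↑M) M hMmatch)
  · -- lower bound
    obtain ⟨I, hI, hIcard⟩ := exists_card_eq_sSup
      (fun S : Finset V => IsIndepVSet G ↑S) (by simp [IsIndepVSet])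
    obtain ⟨M, hMm, hMcard⟩ := exists_card_eq_sSup
      (fun M : Finset (Sym2 V) => IsMatchingSet G ↑M) (by simp [IsMatchingSet])
    rw [indepNumber, matchingNumber, ← hIcard, ← hMcard]
    set B : Finset G.edgeSet := Finset.univ.filter (fun e => (e : Sym2 V) ∈ M) with hB
    have hBM : B.image Subtype.val = M := by
      ext e
      simp only [hB, Finset.mem_image, Finset.mem_filter, Finset.mem_univ, true_and]
      constructor
      · rintro ⟨e', he', rfl⟩; exact he'
      · intro he
        exact ⟨⟨e, hMm.1 he⟩, he, rfl⟩
    have hBcard : B.card = M.card := by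
      rw [← hBM, Finset.card_image_of_injective _ Subtype.val_injective]
    set S : Finset (V ⊕ G.edgeSet) := I.image Sum.inl ∪ B.image Sum.inr with hSdef
    have hdisj : Disjoint (I.image Sum.inl) (B.image Sum.inr) := by
      rw [Finset.disjoint_left]
      intro x hx hx'
      simp only [Finset.mem_image] at hx hx'
      obtain ⟨u, -, rfl⟩ := hx
      obtain ⟨e, -, h⟩ := hx'
      cases h
    have hScard : S.card = I.card + M.card := by
      rw [hSdef, Finset.card_union_of_disjoint hdisj,
        Finset.card_image_of_injective _ Sum.inl_injective,
        Finset.card_image_of_injective _ Sum.inr_injective, hBcard]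
    have hSmem : ∀ x ∈ S, (∃ u ∈ I, x = Sum.inl u) ∨ (∃ e ∈ B, x = Sum.inr e) := by
      intro x hx
      simp only [hSdef, Finset.mem_union, Finset.mem_image] at hx
      rcases hx with ⟨u, hu, rfl⟩ | ⟨e, he, rfl⟩
      · exact Or.inl ⟨u, hu, rfl⟩
      · exact Or.inr ⟨e, he, rfl⟩
    have hSpack : IsOpenPacking (subdivisionGraph G) ↑S := by
      intro x hx y hy hxy
      rcases hSmem x hx with ⟨u, hu, rfl⟩ | ⟨e, he, rfl⟩ <;>
        rcases hSmem y hy with ⟨v, hv, rfl⟩ | ⟨f, hf, rfl⟩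
      · -- inl u, inl v
        have huv : u ≠ v := fun h => hxy (by rw [h])
        rw [Set.disjoint_left]
        intro z hz1 hz2
        cases z with
        | inl w => exact subdiv_not_adj_inl_inl u w hz1
        | inr g =>
          rw [SimpleGraph.mem_neighborSet, subdiv_adj_inl_inr] at hz1 hz2
          have hgs : (g : Sym2 V) = s(u, v) := (Sym2.mem_and_mem_iff huv).mp ⟨hz1, hz2⟩
          have hadj : G.Adj u v := by
            have h2 := g.2
            rw [hgs] at h2
            exact h2
          exact hI hu hv huv hadj
      · -- inl u, inr f
        rw [Set.disjoint_left]
        intro z hz1 hz2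
        cases z with
        | inl w => exact subdiv_not_adj_inl_inl u w hz1
        | inr g => exact subdiv_not_adj_inr_inr f g hz2
      · -- inr e, inl v
        rw [Set.disjoint_left]
        intro z hz1 hz2
        cases z with
        | inl w => exact subdiv_not_adj_inl_inl v w hz2
        | inr g => exact subdiv_not_adj_inr_inr e g hz1
      · -- inr e, inr f
        have hef : e ≠ f := fun h => hxy (by rw [h])
        have hef' : (e : Sym2 V) ≠ (f : Sym2 V) := fun h => hef (Subtype.ext h)
        have heM : (e : Sym2 V) ∈ M := by simpa [hB] using he
        have hfM : (f : Sym2 V) ∈ M := by simpa [hB] using hf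
        rw [Set.disjoint_left]
        intro z hz1 hz2
        cases z with
        | inr g => exact subdiv_not_adj_inr_inr e g hz1
        | inl w =>
          rw [SimpleGraph.mem_neighborSet, subdiv_adj_inr_inl] at hz1 hz2
          exact hMm.2 heM hfM hef' w hz1 hz2
    calc I.card + M.card = S.card := hScard.symm
      _ ≤ _ := le_card_sSup
          (fun S : Finset (V ⊕ G.edgeSet) => IsOpenPacking (subdivisionGraph G) ↑S) S hSpack
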